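/- arXiv:1104.0127 — 9 statements merged into one kernel-verified Lean document; each statement's English description precedes it below -/
import Mathlib

section
/- For each letter σ ∈ Σ set θ_σ = ψ(φ(σ)) and κ_σ = k^{-|φ(σ)|}, and define a 4×4 real matrix M_σ (rows and columns indexed by states 0,1,2,3) with row 0 = ((1/2)(1-θ_σ), (1/2)θ_σ, 1/2, 0), row 1 = ((1/2)(1-θ_σ-κ_σ), (1/2)(θ_σ+κ_σ), 1/2, 0), row 2 = (0,0,1,0), row 3 = (0,0,0,1). Then for every finite word w = σ₁…σ_n over Σ, the row vector e₀ · M_{σ₁} · M_{σ₂} · ⋯ · M_{σ_n} (where e₀ is the indicator row vector of state 0) equals (2^{-n}(1-θ(w)), 2^{-n}θ(w), 1-2^{-n}, 0). -/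
open Matrix

/-- `psi k (d₁ … d_n) = d_n/k + d_{n-1}/k² + ⋯ + d₁/kⁿ`. -/
noncomputable def psi (k : ℕ) (l : List (Fin k)) : ℝ :=
  l.foldl (fun r a => (r + (a : ℝ)) / k) 0

/-- `theta` of a word is `psi` of the concatenation of the images of its letters. -/
noncomputable def theta (k : ℕ) {S : Type*} (φ : S → List (Fin k)) (w : List S) : ℝ :=
  psi k (w.map φ).flatten

/-- The transition matrix `M_σ` of the automaton `A_i` from the PCP instance. -/
noncomputable def Mmat (k : ℕ) {S : Type*} (φ : S → List (Fin k)) (σ : S) :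
    Matrix (Fin 4) (Fin 4) ℝ :=
  !![(1/2) * (1 - psi k (φ σ)), (1/2) * psi k (φ σ), 1/2, 0;
     (1/2) * (1 - psi k (φ σ) - ((k : ℝ) ^ (φ σ).length)⁻¹),
       (1/2) * (psi k (φ σ) + ((k : ℝ) ^ (φ σ).length)⁻¹), 1/2, 0;
     0, 0, 1, 0;
     0, 0, 0, 1]

lemma psi_eq (k : ℕ) (l : List (Fin k)) :
    psi k l = l.foldl (fun r (a : Fin k) => (r + (a : ℝ)) / k) 0 := by
  rw [psi]
  simp only [bind_pure_comp, List.map_eq_map, List.foldl_map]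

lemma psi_foldl (k : ℕ) (hk : 2 ≤ k) (l : List (Fin k)) (r : ℝ) :
    l.foldl (fun r (a : Fin k) => (r + (a : ℝ)) / k) r = psi k l + r / (k : ℝ) ^ l.length := by
  have hk0 : (k : ℝ) ≠ 0 := by positivity
  induction l generalizing r with
  | nil => simp [psi_eq]
  | cons a l ih =>
    rw [List.foldl_cons, ih ((r + (a : ℝ)) / k)]
    have h2 : psi k (a :: l) = psi k l + ((0 + (a : ℝ)) / k) / (k : ℝ) ^ l.length := by
      rw [psi_eq, List.foldl_cons]
      exact ih _
    rw [h2, List.length_cons]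
    field_simp
    ring

lemma psi_append (k : ℕ) (hk : 2 ≤ k) (l₁ l₂ : List (Fin k)) :
    psi k (l₁ ++ l₂) = psi k l₂ + psi k l₁ * ((k : ℝ) ^ l₂.length)⁻¹ := by
  rw [psi_eq k (l₁ ++ l₂), List.foldl_append, ← psi_eq k l₁, psi_foldl k hk, div_eq_mul_inv]

lemma theta_concat (k : ℕ) (hk : 2 ≤ k) {S : Type*} (φ : S → List (Fin k)) (w : List S) (σ : S) :
    theta k φ (w ++ [σ]) = psi k (φ σ) + theta k φ w * ((k : ℝ) ^ (φ σ).length)⁻¹ := by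
  unfold theta
  rw [List.map_append, List.flatten_append]
  simp only [List.map_cons, List.map_nil, List.flatten_cons, List.flatten_nil, List.append_nil]
  exact psi_append k hk _ _

theorem stmt2 (k : ℕ) (hk : 2 ≤ k) (S : Type*) (φ : S → List (Fin k)) (w : List S) :
    w.foldl (fun v σ => Matrix.vecMul v (Mmat k φ σ)) ![(1 : ℝ), 0, 0, 0] =
      ![((2 : ℝ) ^ w.length)⁻¹ * (1 - theta k φ w),
        ((2 : ℝ) ^ w.length)⁻¹ * theta k φ w,
        1 - ((2 : ℝ) ^ w.length)⁻¹, 0] := by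
  induction w using List.reverseRecOn with
  | nil =>
    have : theta k φ [] = 0 := by simp [theta, psi]
    simp [this]
  | append_singleton l σ ih =>
    rw [List.foldl_append, ih]
    rw [List.foldl_cons, List.foldl_nil]
    rw [theta_concat k hk φ l σ]
    funext i
    fin_cases i <;>
      simp [Mmat, Matrix.vecMul, dotProduct, Fin.sum_univ_four, pow_succ,
        mul_inv] <;> ring
end

section
/- Let φ₁, φ₂ : Σ → List (Fin k) and let z ∈ ℕ satisfy |φ_i(σ)| ≤ z for all σ ∈ Σ and i ∈ {1,2}. Let θ_i(w) = ψ(φ_i(w)) for finite words w. Then for every finite word w over Σ, if θ₁(w) ≠ θ₂(w), then (2^{-|w|}·(θ₁(w) - θ₂(w)))² ≥ 1/k^{2·(z+1)·|w|}. -/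
lemma psi_eq_nat (k : ℕ) (hk : (k:ℝ) ≠ 0) (l : List (Fin k)) :
    psi k l = (l.foldr (fun a n => a.val + k*n) 0 : ℕ) / (k:ℝ) ^ l.length := by
  have h : ∀ (l : List (Fin k)) (x : ℝ),
      l.foldl (fun r a => (r + (a:ℝ))/k) x
        = (x + (l.foldr (fun a n => a.val + k*n) 0 : ℕ)) / (k:ℝ) ^ l.length := by
    intro l
    induction l with
    | nil => intro x; simp
    | cons a t ih =>
      intro x
      simp only [List.pure_def, List.bind_eq_flatMap, List.flatMap_cons, List.singleton_append,
        List.foldl_cons, List.foldr_cons, List.length_cons] at ih ⊢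
      rw [ih ((x + (a:ℝ))/k), pow_succ, Nat.cast_add, Nat.cast_mul]
      field_simp
      ring
  simpa [psi] using h l 0

lemma flatten_len_le {k : ℕ} {S : Type*} (φ : S → List (Fin k)) (z : ℕ)
    (hz : ∀ σ : S, (φ σ).length ≤ z) (w : List S) :
    ((w.map φ).flatten).length ≤ z * w.length := by
  rw [List.length_flatten, List.map_map]
  calc (w.map (List.length ∘ φ)).sum ≤ (w.map (List.length ∘ φ)).length • z := by
        apply List.sum_le_card_nsmul
        intro x hx
        obtain ⟨σ, _, rfl⟩ := List.mem_map.mp hx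
        exact hz σ
    _ = z * w.length := by simp [smul_eq_mul, Nat.mul_comm]

theorem stmt5 (k : ℕ) (hk : 2 ≤ k) (S : Type*) (φ₁ φ₂ : S → List (Fin k)) (z : ℕ)
    (hz₁ : ∀ σ : S, (φ₁ σ).length ≤ z) (hz₂ : ∀ σ : S, (φ₂ σ).length ≤ z)
    (w : List S) (hne : theta k φ₁ w ≠ theta k φ₂ w) :
    1 / (k : ℝ) ^ (2 * (z + 1) * w.length) ≤
      (((2 : ℝ) ^ w.length)⁻¹ * (theta k φ₁ w - theta k φ₂ w)) ^ 2 := by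
  have hkR : (2:ℝ) ≤ (k:ℝ) := by exact_mod_cast hk
  have hk0 : (k:ℝ) ≠ 0 := by linarith
  have hk1 : (1:ℝ) ≤ (k:ℝ) := by linarith
  set n := w.length with hn
  set l₁ := (w.map φ₁).flatten with hl₁
  set l₂ := (w.map φ₂).flatten with hl₂
  set L₁ := l₁.length
  set L₂ := l₂.length
  set T₁ := l₁.foldr (fun a n => a.val + k*n) 0 with hT₁
  set T₂ := l₂.foldr (fun a n => a.val + k*n) 0 with hT₂
  have hL₁ : L₁ ≤ z * n := flatten_len_le φ₁ z hz₁ w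
  have hL₂ : L₂ ≤ z * n := flatten_len_le φ₂ z hz₂ w
  set M := max L₁ L₂ with hM
  have hML : M ≤ z * n := max_le hL₁ hL₂
  set A : ℤ := (T₁ : ℤ) * (k:ℤ) ^ (M - L₁) - (T₂ : ℤ) * (k:ℤ) ^ (M - L₂) with hA
  have hpowM : ∀ L : ℕ, L ≤ M → (k:ℝ) ^ M = (k:ℝ) ^ L * (k:ℝ) ^ (M - L) := by
    intro L hL
    rw [← pow_add]
    congr 1
    omega
  have hd : theta k φ₁ w - theta k φ₂ w = (A : ℝ) / (k:ℝ) ^ M := by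
    have h1 : theta k φ₁ w = (T₁ : ℝ) / (k:ℝ) ^ L₁ := psi_eq_nat k hk0 l₁
    have h2 : theta k φ₂ w = (T₂ : ℝ) / (k:ℝ) ^ L₂ := psi_eq_nat k hk0 l₂
    have e1 : (T₁ : ℝ) / (k:ℝ) ^ L₁ = (T₁ : ℝ) * (k:ℝ) ^ (M - L₁) / (k:ℝ) ^ M := by
      rw [hpowM L₁ (le_max_left _ _)]
      rw [div_eq_div_iff (pow_ne_zero _ hk0) (by positivity)]
      ring
    have e2 : (T₂ : ℝ) / (k:ℝ) ^ L₂ = (T₂ : ℝ) * (k:ℝ) ^ (M - L₂) / (k:ℝ) ^ M := by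
      rw [hpowM L₂ (le_max_right _ _)]
      rw [div_eq_div_iff (pow_ne_zero _ hk0) (by positivity)]
      ring
    rw [h1, h2, e1, e2, div_sub_div_same, hA]
    push_cast
    ring
  have hA0 : A ≠ 0 := by
    intro h
    apply hne
    have := hd
    rw [h] at this
    simp at this
    linarith [this]
  have hA1 : (1:ℝ) ≤ (A:ℝ)^2 := by
    have h1 : 1 ≤ |A| := Int.one_le_abs hA0
    have h2 : (1:ℤ) ≤ A^2 := by nlinarith [sq_abs A]
    exact_mod_cast h2
  have key : (2:ℝ) ^ (2*n) * (k:ℝ) ^ (2*M) ≤ (k:ℝ) ^ (2*(z+1)*n) := by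
    have h2n : (2:ℝ)^(2*n) ≤ (k:ℝ)^(2*n) := pow_le_pow_left₀ (by norm_num) hkR _
    have hMz : (k:ℝ)^(2*M) ≤ (k:ℝ)^(2*(z*n)) := pow_le_pow_right₀ hk1 (by omega)
    calc (2:ℝ) ^ (2*n) * (k:ℝ) ^ (2*M) ≤ (k:ℝ)^(2*n) * (k:ℝ)^(2*(z*n)) := by
          apply mul_le_mul h2n hMz (by positivity) (by positivity)
      _ = (k:ℝ) ^ (2*(z+1)*n) := by rw [← pow_add]; congr 1; ring
  have heq : (((2 : ℝ) ^ n)⁻¹ * ((A:ℝ) / (k:ℝ)^M)) ^ 2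
      = (A:ℝ)^2 / ((2:ℝ)^(2*n) * (k:ℝ)^(2*M)) := by
    rw [mul_pow, div_pow, inv_pow, ← pow_mul, ← pow_mul]
    field_simp
    ring
  rw [hd, heq]
  calc 1 / (k:ℝ) ^ (2*(z+1)*n) ≤ 1 / ((2:ℝ)^(2*n) * (k:ℝ)^(2*M)) := by
        apply one_div_le_one_div_of_le (by positivity) key
    _ ≤ (A:ℝ)^2 / ((2:ℝ)^(2*n) * (k:ℝ)^(2*M)) := by
        apply div_le_div_of_nonneg_right ?_ (by positivity)
        · exact hA1
end

section
/- Let Σ be a finite nonempty alphabet, Q a finite type, M : Σ → Matrix Q Q ℝ a family of row-stochastic matrices, F ⊆ Q and q₀ ∈ F. If for every ε > 0 there exists an infinite word w : ℕ → Σ with Safe_F(w) > 1 - ε, then there exists an infinite word w : ℕ → Σ with Safe_F(w) = 1. (In other words, for safety automata the answer to the limit problem is yes if and only if the answer to the almost problem is yes.) -/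
open Matrix Filter Topology

/-- The sub-stochastic matrix obtained from `M` by zeroing out all columns outside `F`. -/
noncomputable def subMat {Q : Type*} [DecidableEq Q] (M : Matrix Q Q ℝ) (F : Finset Q) :
    Matrix Q Q ℝ :=
  Matrix.of fun q q' => if q' ∈ F then M q q' else 0

/-- The probability of staying inside `F` during the first `n` steps while reading `w`,
starting from `q₀`. -/
noncomputable def safeSeq {Q : Type*} [Fintype Q] [DecidableEq Q] {S : Type*}
    (M : S → Matrix Q Q ℝ) (F : Finset Q) (q₀ : Q) (w : ℕ → S) (n : ℕ) : ℝ :=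
  ∑ q, ((List.range n).foldl (fun v i => Matrix.vecMul v (subMat (M (w i)) F))
    (Pi.single q₀ 1)) q

/-- The safety value of the infinite word `w`: the probability of staying in `F` forever,
namely the infimum of the nonincreasing sequence `safeSeq`. -/
noncomputable def safeVal {Q : Type*} [Fintype Q] [DecidableEq Q] {S : Type*}
    (M : S → Matrix Q Q ℝ) (F : Finset Q) (q₀ : Q) (w : ℕ → S) : ℝ :=
  ⨅ n : ℕ, safeSeq M F q₀ w n

section Aux

variable {Q : Type*} [Fintype Q] [DecidableEq Q] {S : Type*}
  (M : S → Matrix Q Q ℝ) (F : Finset Q) (q₀ : Q)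

/-- The state-distribution vector after `n` steps. -/
noncomputable def vecN (w : ℕ → S) (n : ℕ) : Q → ℝ :=
  (List.range n).foldl (fun v i => Matrix.vecMul v (subMat (M (w i)) F)) (Pi.single q₀ 1)

lemma safeSeq_eq_vecN (w : ℕ → S) (n : ℕ) :
    safeSeq M F q₀ w n = ∑ q, vecN M F q₀ w n q := rfl

lemma vecN_zero (w : ℕ → S) : vecN M F q₀ w 0 = Pi.single q₀ 1 := rfl

lemma vecN_succ (w : ℕ → S) (n : ℕ) :
    vecN M F q₀ w (n + 1) = Matrix.vecMul (vecN M F q₀ w n) (subMat (M (w n)) F) := by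
  simp [vecN, List.range_succ]

lemma vecN_prop (hnn : ∀ σ q q', 0 ≤ M σ q q') (hrow : ∀ σ q, ∑ q', M σ q q' = 1)
    (w : ℕ → S) (n : ℕ) :
    (∀ q, 0 ≤ vecN M F q₀ w n q) ∧ ∑ q, vecN M F q₀ w n q ≤ 1 := by
  induction n with
  | zero =>
      constructor
      · intro q
        rw [vecN_zero]
        by_cases h : q = q₀ <;> simp [Pi.single_apply, h]
      · rw [vecN_zero]
        simp
  | succ n ih =>
      have hsubnn : ∀ q q', (0:ℝ) ≤ subMat (M (w n)) F q q' := by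
        intro q q'
        simp only [subMat, Matrix.of_apply]
        split
        · exact hnn _ _ _
        · exact le_rfl
      have hsubrow : ∀ q, ∑ q', subMat (M (w n)) F q q' ≤ 1 := by
        intro q
        calc ∑ q', subMat (M (w n)) F q q' ≤ ∑ q', M (w n) q q' := by
              apply Finset.sum_le_sum
              intro q' _
              simp only [subMat, Matrix.of_apply]
              split
              · exact le_rfl
              · exact hnn _ _ _
          _ = 1 := hrow _ _
      have hentry : ∀ q', vecN M F q₀ w (n + 1) q' =
          ∑ q, vecN M F q₀ w n q * subMat (M (w n)) F q q' := by
        intro q'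
        rw [vecN_succ]
        simp [Matrix.vecMul, dotProduct]
      constructor
      · intro q'
        rw [hentry]
        exact Finset.sum_nonneg fun q _ => mul_nonneg (ih.1 q) (hsubnn q q')
      · calc ∑ q', vecN M F q₀ w (n + 1) q'
            = ∑ q', ∑ q, vecN M F q₀ w n q * subMat (M (w n)) F q q' := by
              exact Finset.sum_congr rfl fun q' _ => hentry q'
          _ = ∑ q, vecN M F q₀ w n q * ∑ q', subMat (M (w n)) F q q' := by
              rw [Finset.sum_comm]
              exact Finset.sum_congr rfl fun q _ => (Finset.mul_sum _ _ _).symm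
          _ ≤ ∑ q, vecN M F q₀ w n q * 1 :=
              Finset.sum_le_sum fun q _ =>
                mul_le_mul_of_nonneg_left (hsubrow q) (ih.1 q)
          _ = ∑ q, vecN M F q₀ w n q := by simp
          _ ≤ 1 := ih.2

lemma vecN_congr (w w' : ℕ → S) (n : ℕ) (h : ∀ i < n, w i = w' i) :
    vecN M F q₀ w n = vecN M F q₀ w' n := by
  induction n with
  | zero => rfl
  | succ n ih =>
      rw [vecN_succ, vecN_succ, ih fun i hi => h i (Nat.lt_succ_of_lt hi),
        h n (Nat.lt_succ_self n)]

lemma safeSeq_congr (w w' : ℕ → S) (n : ℕ) (h : ∀ i < n, w i = w' i) :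
    safeSeq M F q₀ w n = safeSeq M F q₀ w' n := by
  rw [safeSeq_eq_vecN, safeSeq_eq_vecN, vecN_congr M F q₀ w w' n h]

end Aux

theorem stmt7 {Q : Type*} [Fintype Q] [DecidableEq Q] [Nonempty Q]
    {S : Type*} [Fintype S] [Nonempty S]
    (M : S → Matrix Q Q ℝ)
    (hnn : ∀ σ q q', 0 ≤ M σ q q') (hrow : ∀ σ q, ∑ q', M σ q q' = 1)
    (F : Finset Q) (q₀ : Q) (hq₀ : q₀ ∈ F)
    (hlimit : ∀ ε : ℝ, 0 < ε → ∃ w : ℕ → S, 1 - ε < safeVal M F q₀ w) :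
    ∃ w : ℕ → S, safeVal M F q₀ w = 1 := by
  -- pick words with safety value > 1 - 1/(k+1)
  have hpos : ∀ k : ℕ, (0:ℝ) < 1 / (k + 1) := fun k => by positivity
  choose W hW using fun k : ℕ => hlimit (1 / (k + 1)) (hpos k)
  -- safeSeq is bounded below by 0 and above by 1
  have hseq_nonneg : ∀ (w : ℕ → S) (n : ℕ), 0 ≤ safeSeq M F q₀ w n := fun w n => by
    rw [safeSeq_eq_vecN]
    exact Finset.sum_nonneg fun q _ => (vecN_prop M F q₀ hnn hrow w n).1 q
  have hseq_le_one : ∀ (w : ℕ → S) (n : ℕ), safeSeq M F q₀ w n ≤ 1 := fun w n => by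
    rw [safeSeq_eq_vecN]
    exact (vecN_prop M F q₀ hnn hrow w n).2
  have hval_le : ∀ (w : ℕ → S) (n : ℕ), safeVal M F q₀ w ≤ safeSeq M F q₀ w n := by
    intro w n
    exact ciInf_le ⟨0, fun x ⟨m, hm⟩ => hm ▸ hseq_nonneg w m⟩ n
  -- compactness of the space of infinite words
  letI : TopologicalSpace S := ⊥
  haveI : DiscreteTopology S := ⟨rfl⟩
  obtain ⟨w, hw⟩ : ∃ w : ℕ → S, MapClusterPt w atTop W :=
    exists_clusterPt_of_compactSpace (map W atTop) |>.imp fun _ h => h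
  refine ⟨w, ?_⟩
  have hkey : ∀ n : ℕ, safeSeq M F q₀ w n = 1 := by
    intro n
    have hopen : IsOpen {v : ℕ → S | ∀ i < n, v i = w i} := by
      have : {v : ℕ → S | ∀ i < n, v i = w i} =
          ⋂ i ∈ Finset.range n, (fun v : ℕ → S => v i) ⁻¹' {w i} := by
        ext v; simp [Finset.mem_range]
      rw [this]
      exact isOpen_biInter_finset fun i _ =>
        (continuous_apply i).isOpen_preimage _ (isOpen_discrete _)
    have hmem : {v : ℕ → S | ∀ i < n, v i = w i} ∈ 𝓝 w :=
      hopen.mem_nhds fun i _ => rfl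
    have hfreq : ∃ᶠ k in atTop, W k ∈ {v : ℕ → S | ∀ i < n, v i = w i} :=
      mapClusterPt_iff_frequently.mp hw _ hmem
    have hge : ∀ m : ℕ, 1 - 1 / (m + 1 : ℝ) ≤ safeSeq M F q₀ w n := by
      intro m
      obtain ⟨k, hkm, hk⟩ := (frequently_atTop.mp hfreq) m
      have h1 : safeSeq M F q₀ w n = safeSeq M F q₀ (W k) n :=
        (safeSeq_congr M F q₀ (W k) w n hk).symm
      have h2 : 1 - 1 / (k + 1 : ℝ) < safeSeq M F q₀ (W k) n :=
        lt_of_lt_of_le (hW k) (hval_le (W k) n)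
      have h3 : 1 / (k + 1 : ℝ) ≤ 1 / (m + 1 : ℝ) := by
        apply one_div_le_one_div_of_le
        · positivity
        · exact_mod_cast Nat.succ_le_succ hkm
      linarith [h1 ▸ h2]
    have hge1 : 1 ≤ safeSeq M F q₀ w n := by
      by_contra h
      push_neg at h
      obtain ⟨m, hm⟩ := exists_nat_one_div_lt (sub_pos.mpr h)
      have := hge m
      linarith
    exact le_antisymm (hseq_le_one w n) hge1
  rw [safeVal]
  simp only [hkey]
  exact ciInf_const
end

section
/- Let M : Σ → Matrix Q Q ℝ be row-stochastic, C ⊆ Q with (M_σ)_{q,q} = 1 for every q ∈ C and σ ∈ Σ, and suppose there exists η > 0 with ∑_{q' ∈ C} (M_σ)_{q,q'} ≥ η for all σ ∈ Σ, q ∈ Q. Let F ⊆ Q with Q∖F ⊆ C and q₀ ∈ F. Then for every infinite word w : ℕ → Σ, the sequence n ↦ ∑_{q ∈ F∩C} (e_{q₀} · M_{w₀} · ⋯ · M_{w_{n-1}})_q is nondecreasing and converges to Safe_F(w); i.e., the probability of staying in F forever equals the probability of reaching the absorbing accepting states F∩C. -/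
open Matrix Filter

/-- The state distribution after reading the first `n` letters of `w`, starting at `q₀`. -/
noncomputable def wordDist {Q : Type*} [Fintype Q] [DecidableEq Q] {S : Type*}
    (M : S → Matrix Q Q ℝ) (q₀ : Q) (w : ℕ → S) (n : ℕ) : Q → ℝ :=
  (List.range n).foldl (fun v i => Matrix.vecMul v (M (w i))) (Pi.single q₀ 1)

lemma wordDist_zero {Q : Type*} [Fintype Q] [DecidableEq Q] {S : Type*}
    (M : S → Matrix Q Q ℝ) (q₀ : Q) (w : ℕ → S) :
    wordDist M q₀ w 0 = Pi.single q₀ 1 := rfl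

lemma wordDist_succ {Q : Type*} [Fintype Q] [DecidableEq Q] {S : Type*}
    (M : S → Matrix Q Q ℝ) (q₀ : Q) (w : ℕ → S) (n : ℕ) :
    wordDist M q₀ w (n + 1) = Matrix.vecMul (wordDist M q₀ w n) (M (w n)) := by
  unfold wordDist
  rw [List.range_succ, List.foldl_append]
  rfl

lemma wordDist_succ_apply {Q : Type*} [Fintype Q] [DecidableEq Q] {S : Type*}
    (M : S → Matrix Q Q ℝ) (q₀ : Q) (w : ℕ → S) (n : ℕ) (q : Q) :
    wordDist M q₀ w (n + 1) q = ∑ p, wordDist M q₀ w n p * M (w n) p q := by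
  rw [wordDist_succ]
  simp [Matrix.vecMul, dotProduct]

lemma wordDist_nonneg {Q : Type*} [Fintype Q] [DecidableEq Q] {S : Type*}
    (M : S → Matrix Q Q ℝ) (h : ∀ σ q q', 0 ≤ M σ q q') (q₀ : Q) (w : ℕ → S) :
    ∀ n q, 0 ≤ wordDist M q₀ w n q := by
  intro n
  induction n with
  | zero =>
    intro q
    rw [wordDist_zero, Pi.single_apply]
    split <;> norm_num
  | succ n ih =>
    intro q
    rw [wordDist_succ_apply]
    exact Finset.sum_nonneg fun p _ => mul_nonneg (ih p) (h _ p q)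

theorem stmt8 {Q : Type*} [Fintype Q] [DecidableEq Q] [Nonempty Q] {S : Type*}
    (M : S → Matrix Q Q ℝ)
    (hnn : ∀ σ q q', 0 ≤ M σ q q') (hrow : ∀ σ q, ∑ q', M σ q q' = 1)
    (C : Finset Q) (habs : ∀ q ∈ C, ∀ σ, M σ q q = 1)
    (η : ℝ) (hη : 0 < η) (hmin : ∀ σ q, η ≤ ∑ q' ∈ C, M σ q q')
    (F : Finset Q) (hFC : Fᶜ ⊆ C) (q₀ : Q) (hq₀ : q₀ ∈ F) (w : ℕ → S) :
    Monotone (fun n => ∑ q ∈ F ∩ C, wordDist M q₀ w n q) ∧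
      Tendsto (fun n => ∑ q ∈ F ∩ C, wordDist M q₀ w n q) atTop
        (nhds (safeVal M F q₀ w)) := by
  -- notation
  set N : S → Matrix Q Q ℝ := fun σ => subMat (M σ) F with hN
  set x : ℕ → Q → ℝ := wordDist M q₀ w with hx
  set y : ℕ → Q → ℝ := wordDist N q₀ w with hy
  have hNnn : ∀ σ q q', 0 ≤ N σ q q' := by
    intro σ q q'
    simp only [hN, subMat, Matrix.of_apply]
    split
    · exact hnn σ q q'
    · exact le_rfl
  have hxnn : ∀ n q, 0 ≤ x n q := wordDist_nonneg M hnn q₀ w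
  have hynn : ∀ n q, 0 ≤ y n q := wordDist_nonneg N hNnn q₀ w
  -- rows of absorbing states
  have hCrow : ∀ q ∈ C, ∀ σ q', q' ≠ q → M σ q q' = 0 := by
    intro q hq σ q' hne
    have h1 : M σ q q + ∑ q' ∈ {q}ᶜ, M σ q q' = ∑ q'', M σ q q'' := by
      simpa using Finset.sum_add_sum_compl {q} (M σ q)
    have h2 : ∑ q' ∈ ({q}ᶜ : Finset Q), M σ q q' = 0 := by
      have := hrow σ q
      have := habs q hq σ
      linarith
    have := Finset.sum_eq_zero_iff_of_nonneg (fun i _ => hnn σ q i) |>.mp h2 q' (by simpa using hne)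
    exact this
  -- y vanishes outside F
  have hyF : ∀ n q, q ∉ F → y n q = 0 := by
    intro n
    cases n with
    | zero =>
      intro q hq
      rw [hy, wordDist_zero, Pi.single_apply, if_neg]
      rintro rfl; exact hq hq₀
    | succ n =>
      intro q hq
      rw [hy, wordDist_succ_apply]
      apply Finset.sum_eq_zero
      intro p _
      simp [hN, subMat, hq]
  -- x and y agree on F
  have hxyF : ∀ n, ∀ q ∈ F, x n q = y n q := by
    intro n
    induction n with
    | zero => intro q _; rfl
    | succ n ih =>
      intro q hqF
      rw [hx, hy, wordDist_succ_apply, wordDist_succ_apply]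
      apply Finset.sum_congr rfl
      intro p _
      by_cases hpF : p ∈ F
      · rw [← hx, ← hy, ih p hpF]
        simp [hN, subMat, hqF]
      · have hpC : p ∈ C := hFC (Finset.mem_compl.mpr hpF)
        have h1 : M (w n) p q = 0 := hCrow p hpC (w n) q (by rintro rfl; exact hpF hqF)
        have h2 : y n p = 0 := hyF n p hpF
        rw [← hx, ← hy] at *
        rw [h2]
        simp [h1, hN, subMat, hqF]
  -- safeSeq as sum over F of x
  have hsafe : ∀ n, safeSeq M F q₀ w n = ∑ q ∈ F, x n q := by
    intro n
    have h0 : safeSeq M F q₀ w n = ∑ q, y n q := rfl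
    rw [h0, ← Finset.sum_add_sum_compl F (y n)]
    have : ∑ q ∈ Fᶜ, y n q = 0 :=
      Finset.sum_eq_zero fun q hq => hyF n q (Finset.mem_compl.mp hq)
    rw [this, add_zero]
    exact Finset.sum_congr rfl fun q hq => (hxyF n q hq).symm
  -- decomposition : F = (F ∩ C) ∪ (F \ C) and F \ C = Cᶜ
  have hFdiff : F \ C = Cᶜ := by
    ext q
    simp only [Finset.mem_sdiff, Finset.mem_compl]
    constructor
    · rintro ⟨_, h⟩; exact h
    · intro h
      refine ⟨?_, h⟩
      by_contra hqF
      exact h (hFC (Finset.mem_compl.mpr hqF))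
  have hsplit : ∀ n, safeSeq M F q₀ w n
      = (∑ q ∈ F ∩ C, x n q) + ∑ q ∈ Cᶜ, x n q := by
    intro n
    rw [hsafe n, ← Finset.sum_inter_add_sum_sdiff F C (x n), hFdiff]
  -- the escaping mass bound
  have hη1 : η ≤ 1 := by
    calc η ≤ ∑ q' ∈ C, M (w 0) q₀ q' := hmin (w 0) q₀
    _ ≤ ∑ q', M (w 0) q₀ q' :=
        Finset.sum_le_sum_of_subset_of_nonneg (Finset.subset_univ C)
          (fun i _ _ => hnn (w 0) q₀ i)
    _ = 1 := hrow (w 0) q₀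
  have hb : ∀ n, ∑ q ∈ Cᶜ, x n q ≤ (1 - η) ^ n := by
    intro n
    induction n with
    | zero =>
      rw [pow_zero]
      calc ∑ q ∈ Cᶜ, x 0 q ≤ ∑ q, x 0 q :=
            Finset.sum_le_sum_of_subset_of_nonneg (Finset.subset_univ _)
              (fun i _ _ => hxnn 0 i)
      _ = 1 := by
            have : x 0 = Pi.single q₀ 1 := rfl
            rw [this]
            simp [Pi.single_apply]
    | succ n ih =>
      have key : ∑ q ∈ Cᶜ, x (n + 1) q = ∑ p, x n p * ∑ q ∈ Cᶜ, M (w n) p q := by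
        have hrec : ∀ q, x (n + 1) q = ∑ p, x n p * M (w n) p q :=
          fun q => wordDist_succ_apply M q₀ w n q
        simp only [hrec]
        rw [Finset.sum_comm]
        exact Finset.sum_congr rfl fun p _ => by rw [Finset.mul_sum]
      have hinC : ∀ p ∈ C, x n p * ∑ q ∈ Cᶜ, M (w n) p q = 0 := by
        intro p hp
        have : ∑ q ∈ Cᶜ, M (w n) p q = 0 :=
          Finset.sum_eq_zero fun q hq =>
            hCrow p hp (w n) q (by rintro rfl; exact Finset.mem_compl.mp hq hp)
        rw [this, mul_zero]
      have houtC : ∀ p, p ∉ C → x n p * ∑ q ∈ Cᶜ, M (w n) p q ≤ x n p * (1 - η) := by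
        intro p _
        apply mul_le_mul_of_nonneg_left _ (hxnn n p)
        have h1 : ∑ q ∈ C, M (w n) p q + ∑ q ∈ Cᶜ, M (w n) p q = 1 := by
          rw [Finset.sum_add_sum_compl]; exact hrow (w n) p
        have := hmin (w n) p
        linarith
      calc ∑ q ∈ Cᶜ, x (n + 1) q
          = ∑ p, x n p * ∑ q ∈ Cᶜ, M (w n) p q := key
        _ = ∑ p ∈ C, x n p * ∑ q ∈ Cᶜ, M (w n) p q
            + ∑ p ∈ Cᶜ, x n p * ∑ q ∈ Cᶜ, M (w n) p q :=
            (Finset.sum_add_sum_compl C _).symm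
        _ ≤ 0 + ∑ p ∈ Cᶜ, x n p * (1 - η) := by
            apply add_le_add
            · exact le_of_eq (Finset.sum_eq_zero hinC)
            · exact Finset.sum_le_sum fun p hp => houtC p (Finset.mem_compl.mp hp)
        _ = (1 - η) * ∑ p ∈ Cᶜ, x n p := by rw [zero_add, ← Finset.sum_mul, mul_comm]
        _ ≤ (1 - η) * (1 - η) ^ n := by
            apply mul_le_mul_of_nonneg_left ih; linarith
        _ = (1 - η) ^ (n + 1) := by ring
  -- monotonicity
  have hmono : Monotone (fun n => ∑ q ∈ F ∩ C, x n q) := by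
    apply monotone_nat_of_le_succ
    intro n
    show ∑ q ∈ F ∩ C, x n q ≤ ∑ q ∈ F ∩ C, x (n + 1) q
    calc ∑ q ∈ F ∩ C, x n q = ∑ q ∈ F ∩ C, x n q * M (w n) q q := by
          apply Finset.sum_congr rfl
          intro q hq
          rw [habs q (Finset.mem_inter.mp hq).2 (w n), mul_one]
      _ ≤ ∑ q ∈ F ∩ C, ∑ p, x n p * M (w n) p q := by
          apply Finset.sum_le_sum
          intro q _
          exact Finset.single_le_sum
            (fun p _ => mul_nonneg (hxnn n p) (hnn (w n) p q)) (Finset.mem_univ q)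
      _ = ∑ q ∈ F ∩ C, x (n + 1) q := by
          apply Finset.sum_congr rfl
          intro q _
          rw [hx, wordDist_succ_apply]
  -- safeSeq is antitone and bounded below
  have hanti : Antitone (safeSeq M F q₀ w) := by
    apply antitone_nat_of_succ_le
    intro n
    have h1 : safeSeq M F q₀ w (n + 1) = ∑ p, y n p * ∑ q ∈ F, M (w n) p q := by
      have h0 : safeSeq M F q₀ w (n + 1) = ∑ q, y (n + 1) q := rfl
      rw [h0]
      have hrec : ∀ q, y (n + 1) q = ∑ p, y n p * N (w n) p q :=
        fun q => wordDist_succ_apply N q₀ w n q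
      simp only [hrec]
      rw [Finset.sum_comm]
      apply Finset.sum_congr rfl
      intro p _
      rw [Finset.mul_sum, ← Finset.sum_add_sum_compl F]
      have : ∑ q ∈ Fᶜ, y n p * N (w n) p q = 0 := by
        apply Finset.sum_eq_zero
        intro q hq
        simp [hN, subMat, Finset.mem_compl.mp hq]
      rw [this, add_zero]
      apply Finset.sum_congr rfl
      intro q hq
      simp [hN, subMat, hq]
    rw [h1]
    have h2 : safeSeq M F q₀ w n = ∑ p, y n p := rfl
    rw [h2]
    apply Finset.sum_le_sum
    intro p _
    calc y n p * ∑ q ∈ F, M (w n) p q ≤ y n p * 1 := by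
          apply mul_le_mul_of_nonneg_left _ (hynn n p)
          rw [← hrow (w n) p]
          exact Finset.sum_le_sum_of_subset_of_nonneg (Finset.subset_univ F)
            (fun i _ _ => hnn (w n) p i)
      _ = y n p := mul_one _
  have hbdd : BddBelow (Set.range (safeSeq M F q₀ w)) := by
    refine ⟨0, ?_⟩
    rintro _ ⟨n, rfl⟩
    have : safeSeq M F q₀ w n = ∑ q, y n q := rfl
    rw [this]
    exact Finset.sum_nonneg fun q _ => hynn n q
  have hts : Tendsto (safeSeq M F q₀ w) atTop (nhds (safeVal M F q₀ w)) :=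
    tendsto_atTop_ciInf hanti hbdd
  have htb : Tendsto (fun n => ∑ q ∈ Cᶜ, x n q) atTop (nhds 0) := by
    apply squeeze_zero (fun n => Finset.sum_nonneg fun q _ => hxnn n q) hb
    exact tendsto_pow_atTop_nhds_zero_of_lt_one (by linarith) (by linarith)
  refine ⟨hmono, ?_⟩
  have := hts.sub htb
  rw [sub_zero] at this
  apply this.congr
  intro n
  rw [hsplit n]
  ring
end

section
/- Let M : Σ → Matrix Q Q ℝ be row-stochastic, C ⊆ Q with (M_σ)_{q,q} = 1 for every q ∈ C and σ ∈ Σ, and suppose there exists η > 0 with ∑_{q' ∈ C} (M_σ)_{q,q'} ≥ η for all σ ∈ Σ, q ∈ Q. Let F ⊆ Q with Q∖F ⊆ C, let q₀ ∉ C, and define the complemented accepting set F̄ = (Q∖C) ∪ (C∖F). Then for every infinite word w : ℕ → Σ, Safe_F(w) + Safe_{F̄}(w) = 1; i.e., the automaton with accepting set F̄ is the complement of the one with accepting set F. -/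
open Matrix

section aux

variable {Q : Type*} [Fintype Q] [DecidableEq Q] {S : Type*}

/-- The state distribution after `n` steps. -/
noncomputable def evo (M : S → Matrix Q Q ℝ) (F : Finset Q) (q₀ : Q) (w : ℕ → S) (n : ℕ) :
    Q → ℝ :=
  (List.range n).foldl (fun v i => Matrix.vecMul v (subMat (M (w i)) F)) (Pi.single q₀ 1)

variable (M : S → Matrix Q Q ℝ) (F : Finset Q) (q₀ : Q) (w : ℕ → S)

lemma evo_zero : evo M F q₀ w 0 = Pi.single q₀ 1 := rfl

lemma evo_succ (n : ℕ) :
    evo M F q₀ w (n + 1) = Matrix.vecMul (evo M F q₀ w n) (subMat (M (w n)) F) := by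
  unfold evo
  rw [List.range_succ, List.foldl_append]
  rfl

lemma evo_succ_apply (n : ℕ) (q' : Q) :
    evo M F q₀ w (n + 1) q' =
      if q' ∈ F then ∑ q, evo M F q₀ w n q * M (w n) q q' else 0 := by
  rw [evo_succ]
  simp only [Matrix.vecMul, dotProduct, subMat, Matrix.of_apply]
  split
  · rfl
  · simp

lemma safeSeq_eq (n : ℕ) : safeSeq M F q₀ w n = ∑ q, evo M F q₀ w n q := rfl

lemma evo_nonneg (hnn : ∀ σ q q', 0 ≤ M σ q q') : ∀ n q, 0 ≤ evo M F q₀ w n q := by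
  intro n
  induction n with
  | zero =>
    intro q
    rw [evo_zero]
    rcases eq_or_ne q q₀ with h | h
    · subst h; simp
    · simp [Pi.single_apply, h]
  | succ n ih =>
    intro q'
    rw [evo_succ_apply]
    split
    · exact Finset.sum_nonneg fun q _ => mul_nonneg (ih q) (hnn _ _ _)
    · exact le_refl 0

lemma evo_support (hq₀ : q₀ ∈ F) : ∀ n q, q ∉ F → evo M F q₀ w n q = 0 := by
  intro n
  induction n with
  | zero =>
    intro q hq
    rw [evo_zero, Pi.single_apply, if_neg]
    rintro rfl; exact hq hq₀
  | succ n ih =>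
    intro q hq
    rw [evo_succ_apply, if_neg hq]

/-- In a row-stochastic matrix with nonnegative entries, an absorbing state has zero
off-diagonal entries. -/
lemma absorbing_zero (hnn : ∀ σ q q', 0 ≤ M σ q q') (hrow : ∀ σ q, ∑ q', M σ q q' = 1)
    (C : Finset Q) (habs : ∀ q ∈ C, ∀ σ, M σ q q = 1) :
    ∀ σ, ∀ q ∈ C, ∀ q', q' ≠ q → M σ q q' = 0 := by
  intro σ q hq q' hne
  have h1 : ∑ x ∈ {q}ᶜ, M σ q x = 0 := by
    have := hrow σ q
    rw [← Finset.sum_compl_add_sum {q}, Finset.sum_singleton, habs q hq σ] at this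
    linarith
  have := (Finset.sum_eq_zero_iff_of_nonneg (fun x _ => hnn σ q x)).mp h1 q'
  exact this (Finset.mem_compl.mpr (by simp [hne]))

variable (C : Finset Q)

/-- Any two evolutions whose accepting set contains `Cᶜ` agree outside `C`. -/
lemma evo_agree (hnn : ∀ σ q q', 0 ≤ M σ q q') (hrow : ∀ σ q, ∑ q', M σ q q' = 1)
    (habs : ∀ q ∈ C, ∀ σ, M σ q q = 1) (G : Finset Q) (hG : Cᶜ ⊆ G) :
    ∀ n, ∀ q ∉ C, evo M G q₀ w n q = evo M Cᶜ q₀ w n q := by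
  intro n
  induction n with
  | zero => intro q _; rfl
  | succ n ih =>
    intro q' hq'
    have hq'G : q' ∈ G := hG (Finset.mem_compl.mpr hq')
    rw [evo_succ_apply, evo_succ_apply, if_pos hq'G, if_pos (Finset.mem_compl.mpr hq')]
    refine Finset.sum_congr rfl fun q _ => ?_
    by_cases hqC : q ∈ C
    · have : M (w n) q q' = 0 :=
        absorbing_zero M hnn hrow C habs (w n) q hqC q' (fun h => hq' (h ▸ hqC))
      rw [this, mul_zero, mul_zero]
    · rw [ih q hqC]

lemma evo_univ_sum (hrow : ∀ σ q, ∑ q', M σ q q' = 1) :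
    ∀ n, ∑ q, evo M Finset.univ q₀ w n q = 1 := by
  intro n
  induction n with
  | zero => simp [evo_zero]
  | succ n ih =>
    simp only [evo_succ_apply, Finset.mem_univ, if_true]
    rw [Finset.sum_comm]
    calc ∑ q, ∑ q', evo M Finset.univ q₀ w n q * M (w n) q q'
        = ∑ q, evo M Finset.univ q₀ w n q * ∑ q', M (w n) q q' := by
          simp [Finset.mul_sum]
      _ = 1 := by simp only [hrow, mul_one]; exact ih

lemma safeSeq_succ_le (G : Finset Q) (hnn : ∀ σ q q', 0 ≤ M σ q q')
    (hrow : ∀ σ q, ∑ q', M σ q q' = 1) (n : ℕ) :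
    safeSeq M G q₀ w (n + 1) ≤ safeSeq M G q₀ w n := by
  rw [safeSeq_eq, safeSeq_eq]
  simp only [evo_succ_apply]
  rw [Finset.sum_ite_mem, Finset.univ_inter, Finset.sum_comm]
  calc ∑ q, ∑ q' ∈ G, evo M G q₀ w n q * M (w n) q q'
      = ∑ q, evo M G q₀ w n q * ∑ q' ∈ G, M (w n) q q' := by
        simp [Finset.mul_sum]
    _ ≤ ∑ q, evo M G q₀ w n q * 1 := by
        refine Finset.sum_le_sum fun q _ => ?_
        refine mul_le_mul_of_nonneg_left ?_ (evo_nonneg M G q₀ w hnn n q)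
        rw [← hrow (w n) q]
        exact Finset.sum_le_sum_of_subset_of_nonneg (Finset.subset_univ G)
          (fun i _ _ => hnn (w n) q i)
    _ = ∑ q, evo M G q₀ w n q := by simp

end aux

theorem stmt9 {Q : Type*} [Fintype Q] [DecidableEq Q] [Nonempty Q] {S : Type*}
    (M : S → Matrix Q Q ℝ)
    (hnn : ∀ σ q q', 0 ≤ M σ q q') (hrow : ∀ σ q, ∑ q', M σ q q' = 1)
    (C : Finset Q) (habs : ∀ q ∈ C, ∀ σ, M σ q q = 1)
    (η : ℝ) (hη : 0 < η) (hmin : ∀ σ q, η ≤ ∑ q' ∈ C, M σ q q')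
    (F : Finset Q) (hFC : Fᶜ ⊆ C) (q₀ : Q) (hq₀ : q₀ ∉ C) (w : ℕ → S) :
    safeVal M F q₀ w + safeVal M (Cᶜ ∪ (C \ F)) q₀ w = 1 := by
  set Fb : Finset Q := Cᶜ ∪ (C \ F) with hFb
  have hCF : Cᶜ ⊆ F := fun q hq => by
    by_contra h
    exact (Finset.mem_compl.mp hq) (hFC (Finset.mem_compl.mpr h))
  have hCFb : Cᶜ ⊆ Fb := Finset.subset_union_left
  have hq₀C : q₀ ∈ Cᶜ := Finset.mem_compl.mpr hq₀
  have hq₀F : q₀ ∈ F := hCF hq₀C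
  have hq₀Fb : q₀ ∈ Fb := hCFb hq₀C
  -- the key vector identity
  have key : ∀ n q', evo M F q₀ w n q' + evo M Fb q₀ w n q' =
      evo M Finset.univ q₀ w n q' + evo M Cᶜ q₀ w n q' := by
    intro n
    induction n with
    | zero => intro q'; rfl
    | succ n ih =>
      intro q'
      by_cases hq'C : q' ∈ C
      · by_cases hq'F : q' ∈ F
        · -- q' ∈ C ∩ F
          have h1 : q' ∉ Fb := by simp [hFb, hq'C, hq'F]
          have h2 : q' ∉ Cᶜ := by simp [hq'C]
          simp only [evo_succ_apply, if_pos hq'F, if_neg h1, if_neg h2,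
            Finset.mem_univ, if_true, add_zero]
          refine Finset.sum_congr rfl fun q _ => ?_
          by_cases hqC : q ∈ C
          · rcases eq_or_ne q q' with heq | hne
            · rw [heq]
              have e1 : evo M Fb q₀ w n q' = 0 := evo_support M Fb q₀ w hq₀Fb n q' h1
              have e2 : evo M Cᶜ q₀ w n q' = 0 := evo_support M Cᶜ q₀ w hq₀C n q' h2
              have := ih q'
              rw [e1, e2, add_zero, add_zero] at this
              rw [this]
            · rw [absorbing_zero M hnn hrow C habs (w n) q hqC q' hne.symm,
                mul_zero, mul_zero]
          · have e1 : evo M Fb q₀ w n q = evo M Cᶜ q₀ w n q :=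
              evo_agree M q₀ w C hnn hrow habs Fb hCFb n q hqC
            have := ih q
            rw [e1, add_left_inj] at this
            rw [this]
        · -- q' ∈ C \ F
          have h1 : q' ∈ Fb := by simp [hFb, hq'C, hq'F]
          have h2 : q' ∉ Cᶜ := by simp [hq'C]
          simp only [evo_succ_apply, if_neg hq'F, if_pos h1, if_neg h2,
            Finset.mem_univ, if_true, add_zero, zero_add]
          refine Finset.sum_congr rfl fun q _ => ?_
          by_cases hqC : q ∈ C
          · rcases eq_or_ne q q' with heq | hne
            · rw [heq]
              have e1 : evo M F q₀ w n q' = 0 := evo_support M F q₀ w hq₀F n q' hq'F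
              have e2 : evo M Cᶜ q₀ w n q' = 0 := evo_support M Cᶜ q₀ w hq₀C n q' h2
              have := ih q'
              rw [e1, e2, add_zero, zero_add] at this
              rw [this]
            · rw [absorbing_zero M hnn hrow C habs (w n) q hqC q' hne.symm,
                mul_zero, mul_zero]
          · have e1 : evo M F q₀ w n q = evo M Cᶜ q₀ w n q :=
              evo_agree M q₀ w C hnn hrow habs F hCF n q hqC
            have h3 := ih q
            rw [e1] at h3
            have h4 : evo M Fb q₀ w n q = evo M Finset.univ q₀ w n q := by linarith
            rw [h4]
      · -- q' ∉ C
        have h1 : q' ∈ F := hCF (Finset.mem_compl.mpr hq'C)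
        have h2 : q' ∈ Fb := hCFb (Finset.mem_compl.mpr hq'C)
        have h3 : q' ∈ Cᶜ := Finset.mem_compl.mpr hq'C
        simp only [evo_succ_apply, if_pos h1, if_pos h2, if_pos h3,
          Finset.mem_univ, if_true]
        rw [← Finset.sum_add_distrib, ← Finset.sum_add_distrib]
        refine Finset.sum_congr rfl fun q _ => ?_
        rw [← add_mul, ← add_mul, ih q]
  -- the scalar identity
  have scalar : ∀ n, safeSeq M F q₀ w n + safeSeq M Fb q₀ w n =
      1 + safeSeq M Cᶜ q₀ w n := by
    intro n
    rw [safeSeq_eq, safeSeq_eq, safeSeq_eq, ← Finset.sum_add_distrib,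
      ← evo_univ_sum M q₀ w hrow n, ← Finset.sum_add_distrib]
    exact Finset.sum_congr rfl fun q _ => key n q
  -- η ≤ 1
  have hη1 : η ≤ 1 := by
    have h1 := hmin (w 0) q₀
    have h2 : ∑ q' ∈ C, M (w 0) q₀ q' ≤ ∑ q', M (w 0) q₀ q' :=
      Finset.sum_le_sum_of_subset_of_nonneg (Finset.subset_univ C)
        (fun i _ _ => hnn (w 0) q₀ i)
    rw [hrow (w 0) q₀] at h2
    linarith
  -- nonnegativity of safeSeq
  have hSnn : ∀ (G : Finset Q) n, 0 ≤ safeSeq M G q₀ w n := fun G n =>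
    Finset.sum_nonneg fun q _ => evo_nonneg M G q₀ w hnn n q
  -- the escape probability bound
  have bound : ∀ n, safeSeq M Cᶜ q₀ w n ≤ (1 - η) ^ n := by
    intro n
    induction n with
    | zero => simp [safeSeq_eq, evo_zero]
    | succ n ih =>
      rw [safeSeq_eq]
      simp only [evo_succ_apply]
      rw [Finset.sum_ite_mem, Finset.univ_inter, Finset.sum_comm]
      calc ∑ q, ∑ q' ∈ Cᶜ, evo M Cᶜ q₀ w n q * M (w n) q q'
          = ∑ q, evo M Cᶜ q₀ w n q * ∑ q' ∈ Cᶜ, M (w n) q q' := by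
            simp [Finset.mul_sum]
        _ ≤ ∑ q, evo M Cᶜ q₀ w n q * (1 - η) := by
            refine Finset.sum_le_sum fun q _ => ?_
            refine mul_le_mul_of_nonneg_left ?_ (evo_nonneg M Cᶜ q₀ w hnn n q)
            have := hmin (w n) q
            have hsplit : ∑ q' ∈ Cᶜ, M (w n) q q' + ∑ q' ∈ C, M (w n) q q' = 1 := by
              rw [Finset.sum_compl_add_sum, hrow]
            linarith
        _ = (∑ q, evo M Cᶜ q₀ w n q) * (1 - η) := by rw [Finset.sum_mul]
        _ ≤ (1 - η) ^ n * (1 - η) := by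
            refine mul_le_mul_of_nonneg_right ?_ (by linarith)
            exact ih
        _ = (1 - η) ^ (n + 1) := by ring
  -- antitonicity
  have hAnti : ∀ G : Finset Q, Antitone (safeSeq M G q₀ w) := fun G =>
    antitone_nat_of_succ_le fun n => safeSeq_succ_le M q₀ w G hnn hrow n
  have hBdd : ∀ G : Finset Q, BddBelow (Set.range (safeSeq M G q₀ w)) := fun G =>
    ⟨0, by rintro x ⟨n, rfl⟩; exact hSnn G n⟩
  have hT1 : Filter.Tendsto (safeSeq M F q₀ w) Filter.atTop (nhds (safeVal M F q₀ w)) :=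
    tendsto_atTop_ciInf (hAnti F) (hBdd F)
  have hT2 : Filter.Tendsto (safeSeq M Fb q₀ w) Filter.atTop (nhds (safeVal M Fb q₀ w)) :=
    tendsto_atTop_ciInf (hAnti Fb) (hBdd Fb)
  have hT3 : Filter.Tendsto (fun n => safeSeq M F q₀ w n + safeSeq M Fb q₀ w n)
      Filter.atTop (nhds (safeVal M F q₀ w + safeVal M Fb q₀ w)) := hT1.add hT2
  have hT4 : Filter.Tendsto (safeSeq M Cᶜ q₀ w) Filter.atTop (nhds 0) := by
    refine squeeze_zero (fun n => hSnn Cᶜ n) bound ?_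
    exact tendsto_pow_atTop_nhds_zero_of_lt_one (by linarith) (by linarith)
  have hT5 : Filter.Tendsto (fun n => safeSeq M F q₀ w n + safeSeq M Fb q₀ w n)
      Filter.atTop (nhds (1 + 0)) := by
    simp only [scalar]
    exact tendsto_const_nhds.add hT4
  have := tendsto_nhds_unique hT3 hT5
  rw [this, add_zero]
end

section
/- Let 0 < x < 1 be a real number. Over the three-letter alphabet {a, b, $}, define two families of 4×4 row-stochastic matrices (rows/columns indexed 0,1,2,3). First family: A_a has row 0 = (x, 1-x, 0, 0), row 1 = (0,1,0,0), rows 2,3 = identity rows; A_b has row 0 = (0,0,1,0), row 1 = (1,0,0,0), rows 2,3 = identity rows; A_$ has rows 0 and 1 equal to (0,0,0,1) and rows 2,3 = identity rows. Second family: B_a has row 0 = (1-x, x, 0, 0), row 1 = (0,1,0,0), rows 2,3 = identity rows; B_b has row 0 = (0,0,1,0), row 1 = (1,0,0,0), rows 2,3 = identity rows; B_$ has rows 0 and 1 equal to (0,0,0,1) and rows 2,3 = identity rows. For an infinite word w : ℕ → {a,b,$}, let V₁(w) = sup_n (e₀ · A_{w₀} ⋯ A_{w_{n-1}})_2 (the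 probability of reaching the absorbing state 2 in the first automaton) and V₂(w) = sup_n (e₀ · B_{w₀} ⋯ B_{w_{n-1}})_3 (the probability of reaching the absorbing state 3 in the second automaton); both sequences are nondecreasing. Then the following are equivalent: (i) for every ε > 0 there exists an infinite word w with (1/2)·V₁(w) + (1/2)·V₂(w) > 1 - ε; (ii) x > 1/2. -/
open Matrix

/-- The transition matrices of the first automaton `A₁` over the alphabet
`{a, b, $}` (encoded as `0, 1, 2 : Fin 3`); its accepting absorbing state is `2`. -/
noncomputable def Amat (x : ℝ) : Fin 3 → Matrix (Fin 4) (Fin 4) ℝ :=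
  ![!![x, 1 - x, 0, 0; 0, 1, 0, 0; 0, 0, 1, 0; 0, 0, 0, 1],
    !![0, 0, 1, 0; 1, 0, 0, 0; 0, 0, 1, 0; 0, 0, 0, 1],
    !![0, 0, 0, 1; 0, 0, 0, 1; 0, 0, 1, 0; 0, 0, 0, 1]]

/-- The transition matrices of the second automaton `A₂` over the alphabet
`{a, b, $}`; its accepting absorbing state is `3`. -/
noncomputable def Bmat (x : ℝ) : Fin 3 → Matrix (Fin 4) (Fin 4) ℝ :=
  ![!![1 - x, x, 0, 0; 0, 1, 0, 0; 0, 0, 1, 0; 0, 0, 0, 1],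
    !![0, 0, 1, 0; 1, 0, 0, 0; 0, 0, 1, 0; 0, 0, 0, 1],
    !![0, 0, 0, 1; 0, 0, 0, 1; 0, 0, 1, 0; 0, 0, 0, 1]]

/-- The probability of being in state `q` after reading the first `n` letters of `w`. -/
noncomputable def distAt (M : Fin 3 → Matrix (Fin 4) (Fin 4) ℝ) (w : ℕ → Fin 3)
    (n : ℕ) (q : Fin 4) : ℝ :=
  ((List.range n).foldl (fun v i => Matrix.vecMul v (M (w i))) ![(1 : ℝ), 0, 0, 0]) q

/-- The probability of ever reaching the absorbing state `2` in the first automaton. -/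
noncomputable def V₁ (x : ℝ) (w : ℕ → Fin 3) : ℝ :=
  ⨆ n : ℕ, distAt (Amat x) w n 2

/-- The probability of ever reaching the absorbing state `3` in the second automaton. -/
noncomputable def V₂ (x : ℝ) (w : ℕ → Fin 3) : ℝ :=
  ⨆ n : ℕ, distAt (Bmat x) w n 3

lemma vmA0 (x : ℝ) (v : Fin 4 → ℝ) :
    vecMul v (Amat x 0) = ![x * v 0, (1-x) * v 0 + v 1, v 2, v 3] := by
  funext i
  fin_cases i <;>
    simp [Amat, vecMul, dotProduct, Fin.sum_univ_four, vecHead, vecTail] <;> ring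

lemma vmA1 (x : ℝ) (v : Fin 4 → ℝ) :
    vecMul v (Amat x 1) = ![v 1, 0, v 0 + v 2, v 3] := by
  funext i
  fin_cases i <;>
    simp [Amat, vecMul, dotProduct, Fin.sum_univ_four, vecHead, vecTail] <;> ring

lemma vmA2 (x : ℝ) (v : Fin 4 → ℝ) :
    vecMul v (Amat x 2) = ![0, 0, v 2, v 0 + v 1 + v 3] := by
  funext i
  fin_cases i <;>
    simp [Amat, vecMul, dotProduct, Fin.sum_univ_four, vecHead, vecTail] <;> ring

lemma vmB0 (x : ℝ) (v : Fin 4 → ℝ) :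
    vecMul v (Bmat x 0) = ![(1-x) * v 0, x * v 0 + v 1, v 2, v 3] := by
  funext i
  fin_cases i <;>
    simp [Bmat, vecMul, dotProduct, Fin.sum_univ_four, vecHead, vecTail] <;> ring

lemma vmB1 (x : ℝ) (v : Fin 4 → ℝ) :
    vecMul v (Bmat x 1) = ![v 1, 0, v 0 + v 2, v 3] := by
  funext i
  fin_cases i <;>
    simp [Bmat, vecMul, dotProduct, Fin.sum_univ_four, vecHead, vecTail] <;> ring

lemma vmB2 (x : ℝ) (v : Fin 4 → ℝ) :
    vecMul v (Bmat x 2) = ![0, 0, v 2, v 0 + v 1 + v 3] := by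
  funext i
  fin_cases i <;>
    simp [Bmat, vecMul, dotProduct, Fin.sum_univ_four, vecHead, vecTail] <;> ring

noncomputable def dvec (M : Fin 3 → Matrix (Fin 4) (Fin 4) ℝ) (w : ℕ → Fin 3) (n : ℕ) :
    Fin 4 → ℝ :=
  (List.range n).foldl (fun v i => Matrix.vecMul v (M (w i))) ![(1 : ℝ), 0, 0, 0]

lemma dvec_succ (M : Fin 3 → Matrix (Fin 4) (Fin 4) ℝ) (w : ℕ → Fin 3) (n : ℕ) :
    dvec M w (n+1) = vecMul (dvec M w n) (M (w n)) := by
  simp [dvec, List.range_succ]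

lemma fin3cases (c : Fin 3) : c = 0 ∨ c = 1 ∨ c = 2 := by revert c; decide

lemma dvec_key (x : ℝ) (hx0 : 0 ≤ x) (hx1 : x ≤ 1) (M : Fin 3 → Matrix (Fin 4) (Fin 4) ℝ)
    (hM : M = Amat x ∨ M = Bmat x) (w : ℕ → Fin 3) :
    ∀ n, (∀ q, 0 ≤ dvec M w n q) ∧ (∑ q, dvec M w n q = 1) := by
  intro n
  induction n with
  | zero =>
    constructor
    · intro q; fin_cases q <;> norm_num [dvec]
    · norm_num [dvec, Fin.sum_univ_four]; show (1:ℝ) + 0 + 0 = 1; norm_num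
  | succ n ih =>
    obtain ⟨h0, h1⟩ := ih
    have h00 := h0 0; have h01 := h0 1; have h02 := h0 2; have h03 := h0 3
    rw [Fin.sum_univ_four] at h1
    rw [dvec_succ]
    rcases hM with hM | hM <;> subst hM <;>
      rcases fin3cases (w n) with h | h | h <;> rw [h] <;>
      first
      | (rw [vmA0] ; constructor
         · intro q; fin_cases q <;> simp <;> nlinarith
         · rw [Fin.sum_univ_four]; simp; nlinarith)
      | (rw [vmA1] ; constructor
         · intro q; fin_cases q <;> simp <;> nlinarith
         · rw [Fin.sum_univ_four]; simp; nlinarith)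
      | (rw [vmA2] ; constructor
         · intro q; fin_cases q <;> simp <;> nlinarith
         · rw [Fin.sum_univ_four]; simp; nlinarith)
      | (rw [vmB0] ; constructor
         · intro q; fin_cases q <;> simp <;> nlinarith
         · rw [Fin.sum_univ_four]; simp; nlinarith)
      | (rw [vmB1] ; constructor
         · intro q; fin_cases q <;> simp <;> nlinarith
         · rw [Fin.sum_univ_four]; simp; nlinarith)
      | (rw [vmB2] ; constructor
         · intro q; fin_cases q <;> simp <;> nlinarith
         · rw [Fin.sum_univ_four]; simp; nlinarith)

lemma dvec_le_one (x : ℝ) (hx0 : 0 ≤ x) (hx1 : x ≤ 1) (M : Fin 3 → Matrix (Fin 4) (Fin 4) ℝ)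
    (hM : M = Amat x ∨ M = Bmat x) (w : ℕ → Fin 3) (n : ℕ) (q : Fin 4) :
    dvec M w n q ≤ 1 := by
  obtain ⟨h0, h1⟩ := dvec_key x hx0 hx1 M hM w n
  calc dvec M w n q ≤ ∑ q, dvec M w n q :=
        Finset.single_le_sum (fun i _ => h0 i) (Finset.mem_univ q)
    _ = 1 := h1

lemma monoA (x : ℝ) (hx0 : 0 ≤ x) (hx1 : x ≤ 1) (w : ℕ → Fin 3) :
    Monotone fun n => dvec (Amat x) w n 2 := by
  apply monotone_nat_of_le_succ
  intro n
  obtain ⟨h0, -⟩ := dvec_key x hx0 hx1 (Amat x) (Or.inl rfl) w n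
  rw [dvec_succ]
  rcases fin3cases (w n) with h | h | h <;> rw [h]
  · rw [vmA0]; simp
  · rw [vmA1]; simp; linarith [h0 0]
  · rw [vmA2]; simp

lemma monoB (x : ℝ) (hx0 : 0 ≤ x) (hx1 : x ≤ 1) (w : ℕ → Fin 3) :
    Monotone fun n => dvec (Bmat x) w n 3 := by
  apply monotone_nat_of_le_succ
  intro n
  obtain ⟨h0, -⟩ := dvec_key x hx0 hx1 (Bmat x) (Or.inr rfl) w n
  rw [dvec_succ]
  rcases fin3cases (w n) with h | h | h <;> rw [h]
  · rw [vmB0]; simp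
  · rw [vmB1]; simp
  · rw [vmB2]; simp; linarith [h0 0, h0 1]

lemma invar (x : ℝ) (hx0 : 0 ≤ x) (hx2 : x ≤ 1/2) (w : ℕ → Fin 3) : ∀ n,
    dvec (Bmat x) w n 1 ≤ dvec (Amat x) w n 1 ∧
    dvec (Bmat x) w n 0 + dvec (Bmat x) w n 1 ≤ dvec (Amat x) w n 0 + dvec (Amat x) w n 1 ∧
    dvec (Bmat x) w n 3 ≤ dvec (Amat x) w n 3 := by
  have hx1 : x ≤ 1 := by linarith
  intro n
  induction n with
  | zero => norm_num [dvec]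
  | succ n ih =>
    obtain ⟨i1, i2, i3⟩ := ih
    obtain ⟨hA, -⟩ := dvec_key x hx0 hx1 (Amat x) (Or.inl rfl) w n
    obtain ⟨hB, -⟩ := dvec_key x hx0 hx1 (Bmat x) (Or.inr rfl) w n
    have hA0 := hA 0; have hA1 := hA 1; have hB0 := hB 0; have hB1 := hB 1
    rw [dvec_succ, dvec_succ]
    rcases fin3cases (w n) with h | h | h <;> rw [h]
    · rw [vmA0, vmB0]; refine ⟨?_, ?_, ?_⟩ <;> simp <;> nlinarith
    · rw [vmA1, vmB1]; refine ⟨?_, ?_, ?_⟩ <;> simp <;> nlinarith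
    · rw [vmA2, vmB2]; refine ⟨?_, ?_, ?_⟩ <;> simp <;> nlinarith

noncomputable def run (M : Fin 3 → Matrix (Fin 4) (Fin 4) ℝ) (l : List (Fin 3))
    (v : Fin 4 → ℝ) : Fin 4 → ℝ :=
  l.foldl (fun v c => vecMul v (M c)) v

lemma run_append (M : Fin 3 → Matrix (Fin 4) (Fin 4) ℝ) (l₁ l₂ : List (Fin 3))
    (v : Fin 4 → ℝ) : run M (l₁ ++ l₂) v = run M l₂ (run M l₁ v) := by
  simp [run]

lemma run_cons (M : Fin 3 → Matrix (Fin 4) (Fin 4) ℝ) (c : Fin 3) (l : List (Fin 3))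
    (v : Fin 4 → ℝ) : run M (c :: l) v = run M l (vecMul v (M c)) := rfl

lemma dvec_eq_run (M : Fin 3 → Matrix (Fin 4) (Fin 4) ℝ) (w : ℕ → Fin 3) (n : ℕ) :
    dvec M w n = run M ((List.range n).map w) ![(1:ℝ),0,0,0] := by
  simp [dvec, run, List.foldl_map]

lemma map_range_getD {α : Type*} (L : List α) (d : α) :
    (List.range L.length).map (fun i => L.getD i d) = L := by
  apply List.ext_getElem
  · simp
  · intro i h1 h2
    simp [List.getD_eq_getElem?_getD, List.getElem?_eq_getElem h2]

lemma runA_rep (x : ℝ) (k : ℕ) (p q r s : ℝ) :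
    run (Amat x) (List.replicate k 0) ![p, q, r, s] =
      ![x^k * p, (1 - x^k) * p + q, r, s] := by
  induction k generalizing p q with
  | zero => simp [run]
  | succ k ih =>
    rw [List.replicate_succ, run_cons]
    have hv : vecMul ![p,q,r,s] (Amat x 0) = ![x*p, (1-x)*p + q, r, s] := by
      rw [vmA0]; funext i; fin_cases i <;> simp
    rw [hv, ih]
    funext i; fin_cases i <;> simp <;> ring

lemma runB_rep (x : ℝ) (k : ℕ) (p q r s : ℝ) :
    run (Bmat x) (List.replicate k 0) ![p, q, r, s] =
      ![(1-x)^k * p, (1 - (1-x)^k) * p + q, r, s] := by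
  induction k generalizing p q with
  | zero => simp [run]
  | succ k ih =>
    rw [List.replicate_succ, run_cons]
    have hv : vecMul ![p,q,r,s] (Bmat x 0) = ![(1-x)*p, x*p + q, r, s] := by
      rw [vmB0]; funext i; fin_cases i <;> simp
    rw [hv, ih]
    funext i; fin_cases i <;> simp <;> ring

noncomputable def block (k : ℕ) : List (Fin 3) := List.replicate k 0 ++ [1]

lemma runA_block (x : ℝ) (k : ℕ) (p r s : ℝ) :
    run (Amat x) (block k) ![p, 0, r, s] = ![(1 - x^k) * p, 0, x^k * p + r, s] := by
  rw [block, run_append, runA_rep]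
  show vecMul _ (Amat x 1) = _
  rw [vmA1]
  funext i; fin_cases i <;> simp <;> ring

lemma runB_block (x : ℝ) (k : ℕ) (p r s : ℝ) :
    run (Bmat x) (block k) ![p, 0, r, s] = ![(1 - (1-x)^k) * p, 0, (1-x)^k * p + r, s] := by
  rw [block, run_append, runB_rep]
  show vecMul _ (Bmat x 1) = _
  rw [vmB1]
  funext i; fin_cases i <;> simp <;> ring

lemma runA_blocks (x : ℝ) (k j : ℕ) (p r s : ℝ) :
    run (Amat x) (List.flatten (List.replicate j (block k))) ![p, 0, r, s] =
      ![(1 - x^k)^j * p, 0, (1 - (1 - x^k)^j) * p + r, s] := by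
  induction j generalizing p r with
  | zero =>
    simp only [List.replicate, List.flatten_nil, run, List.foldl_nil]
    funext i; fin_cases i <;> simp
  | succ j ih =>
    rw [List.replicate_succ, List.flatten_cons, run_append, runA_block, ih]
    funext i; fin_cases i <;> simp <;> ring

lemma runB_blocks (x : ℝ) (k j : ℕ) (p r s : ℝ) :
    run (Bmat x) (List.flatten (List.replicate j (block k))) ![p, 0, r, s] =
      ![(1 - (1-x)^k)^j * p, 0, (1 - (1 - (1-x)^k)^j) * p + r, s] := by
  induction j generalizing p r with
  | zero =>
    simp only [List.replicate, List.flatten_nil, run, List.foldl_nil]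
    funext i; fin_cases i <;> simp
  | succ j ih =>
    rw [List.replicate_succ, List.flatten_cons, run_append, runB_block, ih]
    funext i; fin_cases i <;> simp <;> ring

noncomputable def theWord (k j : ℕ) : List (Fin 3) :=
  List.flatten (List.replicate j (block k)) ++ [2]

lemma runA_word (x : ℝ) (k j : ℕ) :
    run (Amat x) (theWord k j) ![(1:ℝ),0,0,0] 2 = 1 - (1 - x^k)^j := by
  rw [theWord, run_append, runA_blocks]
  show vecMul _ (Amat x 2) 2 = _
  rw [vmA2]; simp

lemma runB_word (x : ℝ) (k j : ℕ) :
    run (Bmat x) (theWord k j) ![(1:ℝ),0,0,0] 3 = (1 - (1-x)^k)^j := by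
  rw [theWord, run_append, runB_blocks]
  show vecMul _ (Bmat x 2) 3 = _
  rw [vmB2]; simp

lemma distAt_eq (M : Fin 3 → Matrix (Fin 4) (Fin 4) ℝ) (w : ℕ → Fin 3) (n : ℕ) (q : Fin 4) :
    distAt M w n q = dvec M w n q := rfl

lemma pow_one_sub_mul_le (t : ℝ) (ht0 : 0 < t) (ht1 : t ≤ 1) (j : ℕ) :
    (1 - t)^j * (j * t) ≤ 1 := by
  have h1 : 1 + (j:ℝ) * t ≤ (1 + t)^j := one_add_mul_le_pow (by linarith) j
  have hnn : (0:ℝ) ≤ (1-t)^j := pow_nonneg (by linarith) j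
  have h2 : (1-t)^j * (1 + j*t) ≤ (1-t)^j * (1+t)^j :=
    mul_le_mul_of_nonneg_left h1 hnn
  have h3 : (1-t)^j * (1+t)^j = (1 - t^2)^j := by rw [← mul_pow]; ring_nf
  have h4 : (1 - t^2)^j ≤ 1 := pow_le_one₀ (by nlinarith) (by nlinarith)
  nlinarith

theorem stmt10 (x : ℝ) (hx0 : 0 < x) (hx1 : x < 1) :
    (∀ ε : ℝ, 0 < ε → ∃ w : ℕ → Fin 3,
        1 - ε < (1 / 2) * V₁ x w + (1 / 2) * V₂ x w) ↔ 1 / 2 < x := by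
  have hx0' : (0:ℝ) ≤ x := le_of_lt hx0
  have hx1' : x ≤ 1 := le_of_lt hx1
  constructor
  · intro H
    by_contra hle
    push_neg at hle
    obtain ⟨w, hw⟩ := H (1/2) (by norm_num)
    have key : ∀ n, dvec (Amat x) w n 2 + dvec (Bmat x) w n 3 ≤ 1 := by
      intro n
      obtain ⟨-, -, i3⟩ := invar x hx0' hle w n
      obtain ⟨h0, h1⟩ := dvec_key x hx0' hx1' (Amat x) (Or.inl rfl) w n
      rw [Fin.sum_univ_four] at h1
      linarith [h0 0, h0 1]
    have hmA := monoA x hx0' hx1' w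
    have hmB := monoB x hx0' hx1' w
    have hV2le : ∀ m, V₂ x w ≤ 1 - dvec (Amat x) w m 2 := by
      intro m
      apply ciSup_le
      intro n
      calc distAt (Bmat x) w n 3 = dvec (Bmat x) w n 3 := rfl
        _ ≤ dvec (Bmat x) w (max m n) 3 := hmB (le_max_right m n)
        _ ≤ 1 - dvec (Amat x) w (max m n) 2 := by linarith [key (max m n)]
        _ ≤ 1 - dvec (Amat x) w m 2 := by
            have := hmA (le_max_left m n); simp only at this ⊢; linarith
    have hV1le : V₁ x w ≤ 1 - V₂ x w := by
      apply ciSup_le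
      intro m
      have := hV2le m
      rw [distAt_eq]
      linarith
    linarith
  · intro hx ε hε
    set y : ℝ := 1 - x with hy
    have hy0 : 0 ≤ y := by linarith
    have hyx : y / x < 1 := by
      rw [div_lt_one hx0]; linarith
    have hyx0 : 0 ≤ y / x := div_nonneg hy0 hx0'
    obtain ⟨k₁, hk₁⟩ := exists_pow_lt_of_lt_one (show (0:ℝ) < ε^2/8 by positivity) hyx
    obtain ⟨k₂, hk₂⟩ := exists_pow_lt_of_lt_one (show (0:ℝ) < ε/8 by positivity) (show y < 1 by linarith)
    set k := max k₁ k₂ with hk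
    have hrk : (y/x)^k < ε^2/8 :=
      lt_of_le_of_lt (pow_le_pow_of_le_one hyx0 (le_of_lt hyx) (le_max_left _ _)) hk₁
    have hyk : y^k < ε/8 :=
      lt_of_le_of_lt (pow_le_pow_of_le_one hy0 (by linarith) (le_max_right _ _)) hk₂
    have hT0 : (0:ℝ) < x^k := pow_pos hx0 k
    have hT1 : x^k ≤ 1 := pow_le_one₀ hx0' hx1'
    set j : ℕ := ⌈2/(ε * x^k)⌉₊ with hj
    have hjge : 2/(ε * x^k) ≤ (j:ℝ) := Nat.le_ceil _
    have hjlt : (j:ℝ) < 2/(ε * x^k) + 1 := Nat.ceil_lt_add_one (by positivity)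
    have hy0' : 0 < y := by simp only [hy]; linarith
    have hS : 2 ≤ ε * ((j:ℝ) * x^k) := by
      have h1 := mul_le_mul_of_nonneg_right hjge (le_of_lt (mul_pos hε hT0))
      rw [div_mul_cancel₀ _ (ne_of_gt (mul_pos hε hT0))] at h1
      nlinarith
    -- upper bound on (1 - x^k)^j
    have hup : (1 - x^k)^j ≤ ε/2 := by
      have hmul := pow_one_sub_mul_le (x^k) hT0 hT1 j
      have hnn : (0:ℝ) ≤ (1-x^k)^j := pow_nonneg (by linarith) j
      have e1 := mul_le_mul_of_nonneg_right hS hnn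
      have e2 := mul_le_mul_of_nonneg_left hmul (le_of_lt hε)
      nlinarith
    -- lower bound on (1 - y^k)^j
    have hjyk : (j:ℝ) * y^k < ε/2 := by
      have h1 : (j:ℝ)*y^k < (2/(ε*x^k) + 1) * y^k :=
        mul_lt_mul_of_pos_right hjlt (pow_pos hy0' k)
      have h2 : (2/(ε*x^k)) * y^k = (2/ε) * (y/x)^k := by
        rw [div_pow]
        field_simp
      have h3 : (2/ε) * (y/x)^k < (2/ε)*(ε^2/8) :=
        mul_lt_mul_of_pos_left hrk (by positivity)
      have h4 : (2/ε)*(ε^2/8) = ε/4 := by field_simp; ring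
      nlinarith
    have hyk1 : y^k ≤ 1 := pow_le_one₀ hy0 (by linarith)
    have hlo : 1 - ε/2 < (1 - y^k)^j := by
      have hb := one_add_mul_le_pow (show (-2:ℝ) ≤ -(y^k) by linarith) j
      have he : (1 + -(y^k)) = 1 - y^k := by ring
      rw [he] at hb
      nlinarith
    -- the word
    set L : List (Fin 3) := theWord k j with hL
    refine ⟨fun i => L.getD i 2, ?_⟩
    have hA : distAt (Amat x) (fun i => L.getD i 2) L.length 2 = 1 - (1-x^k)^j := by
      rw [distAt_eq, dvec_eq_run, map_range_getD, hL, runA_word]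
    have hB : distAt (Bmat x) (fun i => L.getD i 2) L.length 3 = (1 - y^k)^j := by
      rw [distAt_eq, dvec_eq_run, map_range_getD, hL, runB_word]
    have bddA : BddAbove (Set.range fun n => distAt (Amat x) (fun i => L.getD i 2) n 2) := by
      refine ⟨1, ?_⟩
      rintro v ⟨n, rfl⟩
      exact dvec_le_one x hx0' hx1' _ (Or.inl rfl) _ n 2
    have bddB : BddAbove (Set.range fun n => distAt (Bmat x) (fun i => L.getD i 2) n 3) := by
      refine ⟨1, ?_⟩
      rintro v ⟨n, rfl⟩
      exact dvec_le_one x hx0' hx1' _ (Or.inr rfl) _ n 3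
    have hV1 : 1 - (1-x^k)^j ≤ V₁ x (fun i => L.getD i 2) := by
      rw [← hA]; exact le_ciSup bddA L.length
    have hV2 : (1 - y^k)^j ≤ V₂ x (fun i => L.getD i 2) := by
      rw [← hB]; exact le_ciSup bddB L.length
    linarith
end

section
/- For every real number x with 1/2 < x < 1 and every ε > 0, there exists a sequence n : ℕ → ℕ such that the family (x^{n_k})_{k∈ℕ} is not summable, while the family ((1-x)^{n_k})_{k∈ℕ} is summable and ∑_{k=0}^∞ (1-x)^{n_k} ≤ ε. -/
theorem stmt14 (x : ℝ) (hx0 : 1 / 2 < x) (hx1 : x < 1) (ε : ℝ) (hε : 0 < ε) :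
    ∃ n : ℕ → ℕ,
      ¬ Summable (fun k : ℕ => x ^ n k) ∧
        Summable (fun k : ℕ => (1 - x) ^ n k) ∧
          ∑' k : ℕ, (1 - x) ^ n k ≤ ε := by
  have hx : 0 < x := by linarith
  have h1x0 : 0 < 1 - x := by linarith
  have h1x1 : 1 - x < 1 := by linarith
  have hlx : Real.log x < 0 := Real.log_neg hx hx1
  have hlxne : Real.log x ≠ 0 := ne_of_lt hlx
  set r : ℝ := Real.log (1 - x) / Real.log x with hr
  have hlt : Real.log (1 - x) < Real.log x := Real.log_lt_log h1x0 (by linarith)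
  have hr1 : 1 < r := by
    rw [hr, lt_div_iff_of_neg hlx]; linarith
  have hxr : x ^ r = 1 - x := by
    rw [hr, Real.rpow_def_of_pos hx, mul_comm, div_mul_cancel₀ _ hlxne,
      Real.exp_log h1x0]
  -- the base sequence
  set c : ℕ → ℝ := fun k => Real.log (k + 1) / (-Real.log x) with hc
  have hc0 : ∀ k : ℕ, 0 ≤ c k := by
    intro k
    apply div_nonneg
    · exact Real.log_nonneg (by linarith [Nat.cast_nonneg (α := ℝ) k])
    · linarith
  set m : ℕ → ℕ := fun k => ⌈c k⌉₊ with hm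
  -- x ^ (c k) = (k+1)⁻¹
  have hxc : ∀ k : ℕ, x ^ (c k) = ((k : ℝ) + 1)⁻¹ := by
    intro k
    rw [Real.rpow_def_of_pos hx, hc]
    have : Real.log x * (Real.log (↑k + 1) / -Real.log x) = -Real.log ((k : ℝ) + 1) := by
      field_simp
    rw [this, Real.exp_neg, Real.exp_log (by positivity)]
  have hupper : ∀ k : ℕ, x ^ (m k) ≤ ((k : ℝ) + 1)⁻¹ := by
    intro k
    rw [← hxc k, ← Real.rpow_natCast x (m k)]
    exact Real.rpow_le_rpow_of_exponent_ge hx hx1.le (Nat.le_ceil _)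
  have hlower : ∀ k : ℕ, x * ((k : ℝ) + 1)⁻¹ ≤ x ^ (m k) := by
    intro k
    have h1 : (m k : ℝ) ≤ c k + 1 := by
      exact_mod_cast le_of_lt (Nat.ceil_lt_add_one (hc0 k))
    calc x * ((k : ℝ) + 1)⁻¹ = x ^ (c k + 1) := by
          rw [Real.rpow_add hx, hxc k, Real.rpow_one]; ring
      _ ≤ x ^ ((m k : ℝ)) := Real.rpow_le_rpow_of_exponent_ge hx hx1.le h1
      _ = x ^ (m k) := Real.rpow_natCast x (m k)
  -- (1-x)^(m k) ≤ (k+1)^(-r)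
  have hsummand : ∀ k : ℕ, (1 - x) ^ (m k) ≤ ((k : ℝ) + 1) ^ (-r) := by
    intro k
    have h1 : (1 - x) ^ (m k) = (x ^ (m k)) ^ r := by
      rw [← hxr, ← Real.rpow_natCast (x ^ r) (m k), ← Real.rpow_natCast x (m k),
        ← Real.rpow_mul hx.le, ← Real.rpow_mul hx.le, mul_comm]
    rw [h1, Real.rpow_neg (by positivity), ← Real.inv_rpow (by positivity)]
    exact Real.rpow_le_rpow (by positivity) (hupper k) (by linarith)
  have hBsum : Summable (fun k : ℕ => ((k : ℝ) + 1) ^ (-r)) := by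
    have := (Real.summable_nat_rpow (p := -r)).2 (by linarith)
    exact_mod_cast (summable_nat_add_iff 1).2 this
  -- summability of (1-x)^(m k)
  have hsum1 : Summable (fun k : ℕ => (1 - x) ^ (m k)) :=
    Summable.of_nonneg_of_le (fun k => by positivity) hsummand hBsum
  -- choose N
  set S : ℝ := ∑' k : ℕ, (1 - x) ^ (m k) with hS
  have hS0 : 0 ≤ S := tsum_nonneg fun k => by positivity
  obtain ⟨N, hN⟩ := exists_pow_lt_of_lt_one (show (0:ℝ) < ε / (S + 1) by positivity) h1x1
  refine ⟨fun k => N + m k, ?_, ?_, ?_⟩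
  · -- not summable
    intro habs
    have hxN : (0:ℝ) < x ^ N := by positivity
    have h2 : Summable (fun k : ℕ => x ^ (m k)) := by
      have : Summable (fun k : ℕ => x ^ N * x ^ (m k)) := by
        simpa [pow_add] using habs
      exact (summable_mul_left_iff (ne_of_gt hxN)).mp this
    have h3 : Summable (fun k : ℕ => x * ((k : ℝ) + 1)⁻¹) :=
      Summable.of_nonneg_of_le (fun k => by positivity) hlower h2
    have h4 : Summable (fun k : ℕ => ((k : ℝ) + 1)⁻¹) :=
      (summable_mul_left_iff (ne_of_gt hx)).mp h3
    have h5 : Summable (fun k : ℕ => ((k : ℝ))⁻¹) := by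
      rw [← summable_nat_add_iff 1]
      exact_mod_cast h4
    exact Real.not_summable_natCast_inv h5
  · -- summable
    have : Summable (fun k : ℕ => (1 - x) ^ N * (1 - x) ^ (m k)) := hsum1.mul_left _
    simpa [pow_add] using this
  · -- tsum bound
    have heq : ∑' k : ℕ, (1 - x) ^ (N + m k) = (1 - x) ^ N * S := by
      rw [hS, ← tsum_mul_left]
      congr 1; funext k; rw [pow_add]
    rw [heq]
    have h1 : (1 - x) ^ N * S ≤ (ε / (S + 1)) * (S + 1) := by
      apply mul_le_mul hN.le (by linarith) hS0 (by positivity)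
    rw [div_mul_cancel₀ _ (by positivity : S + 1 ≠ 0)] at h1
    exact h1
end

section
/- For every real number x with 1/2 < x < 1 and every ε > 0, there exist m ∈ ℕ and n : Fin m → ℕ such that ∏_{j<m} (1 - x^{n_j}) ≤ ε and ∑_{j<m} (1-x)^{n_j} ≤ 2ε. -/
theorem stmt15 (x : ℝ) (hx0 : 1 / 2 < x) (hx1 : x < 1) (ε : ℝ) (hε : 0 < ε) :
    ∃ (m : ℕ) (n : Fin m → ℕ),
      ∏ j : Fin m, (1 - x ^ n j) ≤ ε ∧ ∑ j : Fin m, (1 - x) ^ n j ≤ 2 * ε := by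
  by_cases h1 : 1 ≤ ε
  · exact ⟨0, Fin.elim0, by simp [h1], by simp; linarith⟩
  push_neg at h1
  have hx0' : (0:ℝ) < x := by linarith
  set c : ℝ := 1 - x with hc
  have hc0 : 0 < c := by simp [hc]; linarith
  have hcx : c < x := by simp [hc]; linarith
  set r : ℝ := c / x with hr
  have hr0 : 0 < r := div_pos hc0 hx0'
  have hr1 : r < 1 := (div_lt_one hx0').mpr hcx
  have hcr : c ≤ r := by
    rw [hr, le_div_iff₀ hx0']
    nlinarith
  have hlog : 0 < -Real.log ε := by
    have := Real.log_neg hε h1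
    linarith
  have hB : (0:ℝ) < 1 - Real.log ε := by linarith
  have hA : (0:ℝ) < 2 * ε / (1 - Real.log ε) := div_pos (by linarith) hB
  obtain ⟨n, hn⟩ := exists_pow_lt_of_lt_one hA hr1
  have hxn0 : 0 < x ^ n := pow_pos hx0' n
  have hxn1 : x ^ n ≤ 1 := pow_le_one₀ (le_of_lt hx0') (le_of_lt hx1)
  set q : ℝ := 1 - x ^ n with hq
  have hq0 : 0 ≤ q := by simp [hq]; linarith
  have hq1 : q < 1 := by simp [hq]; linarith
  have hex : ∃ m : ℕ, q ^ m ≤ ε := by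
    obtain ⟨m, hm⟩ := exists_pow_lt_of_lt_one hε hq1
    exact ⟨m, le_of_lt hm⟩
  set m := Nat.find hex with hm
  refine ⟨m, fun _ => n, ?_, ?_⟩
  · simpa [Finset.prod_const] using Nat.find_spec hex
  · rw [Finset.sum_const, Finset.card_univ, Fintype.card_fin, nsmul_eq_mul]
    -- bound m
    rcases Nat.eq_zero_or_pos m with hm0 | hm0
    · rw [hm0]; simp; positivity
    obtain ⟨k, hk⟩ : ∃ k, m = k + 1 := ⟨m - 1, (Nat.succ_pred_eq_of_pos hm0).symm⟩
    have hkmin : ε < q ^ k := by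
      have := Nat.find_min hex (by omega : k < m)
      push_neg at this
      exact this
    -- q ≤ exp (-(x^n))
    have hqe : q ≤ Real.exp (-(x ^ n)) := by
      have := Real.add_one_le_exp (-(x ^ n))
      linarith [this]
    have hke : ε < Real.exp (-(k * x ^ n)) := by
      calc ε < q ^ k := hkmin
        _ ≤ Real.exp (-(x ^ n)) ^ k := pow_le_pow_left₀ hq0 hqe k
        _ = Real.exp (-(k * x ^ n)) := by
            rw [← Real.exp_nat_mul]; ring_nf
    have hklog : (k : ℝ) * x ^ n < -Real.log ε := by
      have := Real.log_lt_log hε hke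
      rw [Real.log_exp] at this
      linarith
    have hkb : (k : ℝ) ≤ -Real.log ε / x ^ n := by
      rw [le_div_iff₀ hxn0]; linarith
    have hcn0 : (0:ℝ) ≤ c ^ n := le_of_lt (pow_pos hc0 n)
    have hrn : c ^ n / x ^ n = r ^ n := by
      rw [hr, div_pow]
    have hsum : (m : ℝ) * c ^ n ≤ (1 - Real.log ε) * r ^ n := by
      have h2 : (m : ℝ) = (k : ℝ) + 1 := by rw [hk]; push_cast; ring
      rw [h2]
      have hkc : (k : ℝ) * c ^ n ≤ (-Real.log ε) * r ^ n := by
        calc (k : ℝ) * c ^ n ≤ (-Real.log ε / x ^ n) * c ^ n :=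
              mul_le_mul_of_nonneg_right hkb hcn0
          _ = (-Real.log ε) * (c ^ n / x ^ n) := by ring
          _ = (-Real.log ε) * r ^ n := by rw [hrn]
      have hcrn : c ^ n ≤ r ^ n := pow_le_pow_left₀ (le_of_lt hc0) hcr n
      nlinarith
    have hfin : (1 - Real.log ε) * r ^ n ≤ 2 * ε := by
      rw [lt_div_iff₀ hB] at hn
      nlinarith [le_of_lt hn]
    linarith
end

section
/- Let 0 < x < 1 be a real number. Then the following are equivalent: (i) for every ε > 0 there exist m ∈ ℕ and n : Fin m → ℕ such that ∏_{j<m} (1 - x^{n_j}) ≤ ε and 1 - ∏_{j<m} (1 - (1-x)^{n_j}) ≤ ε; (ii) x > 1/2. (This is the numerical core of the lemma stating that the limit problem for the combined acceptance-absorbing reachability automaton has answer yes iff x > 1/2: the first quantity is the rejection probability of the first component automaton and the second is the rejection probability of the second component automaton on the word a^{n_0} b a^{n_1} b … a^{n_{m-1}} b $^ω.) -/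
theorem stmt17 (x : ℝ) (hx0 : 0 < x) (hx1 : x < 1) :
    (∀ ε : ℝ, 0 < ε → ∃ (m : ℕ) (n : Fin m → ℕ),
        ∏ j : Fin m, (1 - x ^ n j) ≤ ε ∧
          1 - ∏ j : Fin m, (1 - (1 - x) ^ n j) ≤ ε) ↔ 1 / 2 < x := by
  constructor
  · intro h
    by_contra hle
    push_neg at hle
    obtain ⟨m, n, h1, h2⟩ := h (1/3) (by norm_num)
    have hxle : x ≤ 1 - x := by linarith
    have hprod : ∏ j : Fin m, (1 - (1 - x) ^ n j) ≤ ∏ j : Fin m, (1 - x ^ n j) := by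
      apply Finset.prod_le_prod
      · intro j _
        have : (1 - x) ^ n j ≤ 1 := pow_le_one₀ (by linarith) (by linarith)
        linarith
      · intro j _
        have : x ^ n j ≤ (1 - x) ^ n j := pow_le_pow_left₀ hx0.le hxle _
        linarith
    linarith
  · intro hx ε hε
    set L : ℝ := max 1 (Real.log (1 / ε)) with hLdef
    have hL0 : 0 < L := lt_of_lt_of_le one_pos (le_max_left _ _)
    have hLlog : Real.log (1 / ε) ≤ L := le_max_right _ _
    have hr1 : (1 - x) / x < 1 := by rw [div_lt_one hx0]; linarith
    have hr0 : 0 ≤ (1 - x) / x := div_nonneg (by linarith) hx0.le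
    have h1x0 : (0 : ℝ) ≤ 1 - x := by linarith
    have h1x1 : 1 - x < 1 := by linarith
    have htend : Filter.Tendsto (fun k : ℕ => L * ((1 - x) / x) ^ k + (1 - x) ^ k)
        Filter.atTop (nhds 0) := by
      have t1 := tendsto_pow_atTop_nhds_zero_of_lt_one hr0 hr1
      have t2 := tendsto_pow_atTop_nhds_zero_of_lt_one h1x0 h1x1
      have := (t1.const_mul L).add t2
      simpa using this
    obtain ⟨k, hk⟩ := (htend.eventually_le_const hε).exists
    have hxk0 : (0 : ℝ) < x ^ k := pow_pos hx0 k
    have hxk1 : x ^ k ≤ 1 := pow_le_one₀ hx0.le hx1.le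
    have h1xk0 : (0 : ℝ) ≤ (1 - x) ^ k := pow_nonneg h1x0 k
    have h1xk1 : (1 - x) ^ k ≤ 1 := pow_le_one₀ h1x0 h1x1.le
    set m : ℕ := ⌈L / x ^ k⌉₊ with hmdef
    have hmL : L ≤ (m : ℝ) * x ^ k := by
      have := Nat.le_ceil (L / x ^ k)
      calc L = (L / x ^ k) * x ^ k := by field_simp
        _ ≤ (m : ℝ) * x ^ k := by
          exact mul_le_mul_of_nonneg_right this hxk0.le
    have hmub : (m : ℝ) ≤ L / x ^ k + 1 := by
      have := Nat.ceil_lt_add_one (le_of_lt (div_pos hL0 hxk0))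
      exact le_of_lt this
    refine ⟨m, fun _ => k, ?_, ?_⟩
    · have hgoal : (1 - x ^ k) ^ m ≤ ε := by
        have hb : 1 - x ^ k ≤ Real.exp (-(x ^ k)) := by
          have := Real.add_one_le_exp (-(x ^ k))
          linarith
        calc (1 - x ^ k) ^ m ≤ Real.exp (-(x ^ k)) ^ m :=
              pow_le_pow_left₀ (by linarith) hb m
          _ = Real.exp ((m : ℝ) * -(x ^ k)) := (Real.exp_nat_mul _ m).symm
          _ ≤ Real.exp (Real.log ε) := by
              apply Real.exp_le_exp.mpr
              have : Real.log (1 / ε) = -Real.log ε := by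
                rw [one_div, Real.log_inv]
              nlinarith [hmL, hLlog]
          _ = ε := Real.exp_log hε
      simpa [Finset.prod_const] using hgoal
    · have hbern : 1 - (m : ℝ) * (1 - x) ^ k ≤ (1 - (1 - x) ^ k) ^ m := by
        have := one_add_mul_le_pow (a := -(1 - x) ^ k) (by linarith) m
        have h2 : (1 : ℝ) + (m : ℝ) * -(1 - x) ^ k = 1 - (m : ℝ) * (1 - x) ^ k := by ring
        rw [h2] at this
        simpa [sub_eq_add_neg] using this
      have hmb : (m : ℝ) * (1 - x) ^ k ≤ ε := by
        have h1 : (m : ℝ) * (1 - x) ^ k ≤ (L / x ^ k + 1) * (1 - x) ^ k :=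
          mul_le_mul_of_nonneg_right hmub h1xk0
        have h2 : (L / x ^ k + 1) * (1 - x) ^ k = L * ((1 - x) / x) ^ k + (1 - x) ^ k := by
          rw [div_pow]; field_simp
        rw [h2] at h1
        exact h1.trans hk
      have hgoal : 1 - (1 - (1 - x) ^ k) ^ m ≤ ε := by linarith
      simpa [Finset.prod_const] using hgoal
end
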